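/- For all natural numbers n ≥ k ≥ 1, if m = R_1(n,n,k) is the diagonal triangular Ramsey number, then (m+1)^{2T_n} ≥ sqrt(2πT_n)·(T_n/e)^{T_n}·2^{(n/k)^k + T_n - 1}, and hence m > (2πT_n)^{1/(4T_n)}·sqrt(2T_n/e)·2^{(n^k - k^k)/(2 k^k T_n)} - 1, where T_n = n(n+1)/2. -/

import Mathlib

/-- The `n`-th triangular number. -/
def T (n : ℕ) : ℕ := n * (n + 1) / 2

/-- The bracket numbers, defined by the recursion
`[n, k] = [n-1, k] + C(n,k) * [n-1, k-1]` with `[n, 0] = 1` and `[n, n] = 1`. -/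
def brack : ℕ → ℕ → ℕ
  | _, 0 => 1
  | 0, _ + 1 => 0
  | n + 1, k + 1 =>
    if n + 1 = k + 1 then 1
    else brack n (k + 1) + Nat.choose (n + 1) (k + 1) * brack n k

/-- A `△_n` on the triangular board with `m` levels (positions are labeled `1, …, T m`
row by row, row `r` being the labels in `(T (r-1), T r]`): a selection of `n` rows in
increasing order together with `j + 1` positions from the `j`-th selected row. -/
structure BTri (m n : ℕ) where
  row : Fin n → ℕ
  mono : StrictMono row
  row_pos : ∀ j, 1 ≤ row j
  row_le : ∀ j, row j ≤ m
  cells : Fin n → Finset ℕ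
  card_cells : ∀ j, (cells j).card = (j : ℕ) + 1
  cells_mem : ∀ j, cells j ⊆ Finset.Ioc (T (row j - 1)) (T (row j))

/-- The set of positions of a `△_n` on the board. -/
def BTri.toSet {m n : ℕ} (Z : BTri m n) : Finset ℕ := Finset.univ.biUnion Z.cells

/-- `S ≤ Z`: the `△_k` `S` is contained in the `△_n` `Z` in the level-respecting order,
i.e. each level of `S` is contained in a single distinct level of `Z`, in increasing order. -/
def BTri.le {m k n : ℕ} (S : BTri m k) (Z : BTri m n) : Prop :=
  ∃ e : Fin k → Fin n, StrictMono e ∧ ∀ j, S.cells j ⊆ Z.cells (e j)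

/-- The triangular Ramsey number `R₁(p, q, k)`: the least `m ≥ max p q` such that every
two-coloring of the `△_k`'s on the board with `m` levels contains a `△_p` all of whose
`△_k`'s are in color one, or a `△_q` all of whose `△_k`'s are in color two. -/
noncomputable def R1 (p q k : ℕ) : ℕ :=
  sInf {m | max p q ≤ m ∧ ∀ χ : Finset ℕ → Bool,
    (∃ Z : BTri m p, ∀ S : BTri m k, S.le Z → χ S.toSet = true) ∨
    (∃ Z : BTri m q, ∀ S : BTri m k, S.le Z → χ S.toSet = false)}

lemma T_mul_two (r : ℕ) : T r * 2 = r * (r + 1) :=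
  Nat.div_mul_cancel (Nat.even_mul_succ_self r).two_dvd

lemma T_succ (r : ℕ) : T (r + 1) = T r + (r + 1) := by
  have h1 : T (r + 1) * 2 = r * r + 3 * r + 2 := by rw [T_mul_two]; ring
  have h2 : T r * 2 = r * r + r := by rw [T_mul_two]; ring
  omega

lemma T_mono : Monotone T := monotone_nat_of_le_succ (fun r => by rw [T_succ]; omega)

lemma card_Ioc_T (r : ℕ) : (Finset.Ioc (T r) (T (r + 1))).card = r + 1 := by
  rw [Nat.card_Ioc, T_succ]; omega

lemma card_Ioc_T' {r : ℕ} (hr : 1 ≤ r) : (Finset.Ioc (T (r - 1)) (T r)).card = r := by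
  obtain ⟨s, rfl⟩ : ∃ s, s + 1 = r := ⟨r - 1, by omega⟩
  simpa using card_Ioc_T s

lemma Ioc_T_disjoint_aux {a b : ℕ} (h : a < b) :
    Disjoint (Finset.Ioc (T (a - 1)) (T a)) (Finset.Ioc (T (b - 1)) (T b)) := by
  rw [Finset.disjoint_left]
  intro p hp hq
  rw [Finset.mem_Ioc] at hp hq
  have : T a ≤ T (b - 1) := T_mono (by omega)
  omega

lemma Ioc_T_disjoint {a b : ℕ} (h : a ≠ b) :
    Disjoint (Finset.Ioc (T (a - 1)) (T a)) (Finset.Ioc (T (b - 1)) (T b)) := by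
  rcases lt_or_gt_of_ne h with h' | h'
  · exact Ioc_T_disjoint_aux h'
  · exact (Ioc_T_disjoint_aux h').symm

lemma sum_fin_T (n : ℕ) : (∑ j : Fin n, ((j : ℕ) + 1)) = T n := by
  have h1 : (∑ j : Fin n, ((j : ℕ) + 1)) = ∑ i ∈ Finset.range n, (i + 1) :=
    Fin.sum_univ_eq_sum_range _ n
  have h2 : (∑ i ∈ Finset.range (n + 1), i) = ∑ i ∈ Finset.range n, (i + 1) + 0 :=
    Finset.sum_range_succ' _ n
  have h3 : (∑ i ∈ Finset.range (n + 1), i) * 2 = n * n + n := by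
    rw [Finset.sum_range_id_mul_two]; simp; ring
  have h4 : T n * 2 = n * n + n := by rw [T_mul_two]; ring
  omega

namespace BTri
variable {m n k : ℕ}

lemma cells_disjoint (Z : BTri m n) {i j : Fin n} (h : i ≠ j) :
    Disjoint (Z.cells i) (Z.cells j) :=
  Finset.disjoint_of_subset_left (Z.cells_mem i) <|
    Finset.disjoint_of_subset_right (Z.cells_mem j) <|
      Ioc_T_disjoint (fun hr => h (Z.mono.injective hr))

lemma card_toSet (Z : BTri m n) : Z.toSet.card = T n := by
  rw [BTri.toSet, Finset.card_biUnion (fun i _ j _ hij => Z.cells_disjoint hij)]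
  simp only [Z.card_cells]
  exact sum_fin_T n

lemma mem_toSet {Z : BTri m n} {p : ℕ} : p ∈ Z.toSet ↔ ∃ j, p ∈ Z.cells j := by
  simp [BTri.toSet]

lemma toSet_subset (Z : BTri m n) : Z.toSet ⊆ Finset.Ioc 0 (T m) := by
  intro p hp
  obtain ⟨j, hj⟩ := mem_toSet.1 hp
  have h2 := Z.cells_mem j hj
  rw [Finset.mem_Ioc] at h2 ⊢
  exact ⟨by omega, le_trans h2.2 (T_mono (Z.row_le j))⟩

lemma le_of_toSet_subset {S : BTri m k} {Z : BTri m n} (h : S.toSet ⊆ Z.toSet) :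
    S.le Z := by
  have key : ∀ t : Fin k, ∃ j : Fin n, Z.row j = S.row t := by
    intro t
    have hne : (S.cells t).Nonempty := Finset.card_pos.1 (by rw [S.card_cells]; omega)
    obtain ⟨p, hp⟩ := hne
    have hpZ : p ∈ Z.toSet := h (mem_toSet.2 ⟨t, hp⟩)
    obtain ⟨j, hj⟩ := mem_toSet.1 hpZ
    refine ⟨j, ?_⟩
    by_contra hne'
    exact Finset.disjoint_left.1 (Ioc_T_disjoint hne') (Z.cells_mem j hj) (S.cells_mem t hp)
  choose e he using key
  refine ⟨e, ?_, ?_⟩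
  · intro a b hab
    have h2 : Z.row (e a) < Z.row (e b) := by rw [he a, he b]; exact S.mono hab
    exact Z.mono.lt_iff_lt.1 h2
  · intro t p hp
    have hpZ : p ∈ Z.toSet := h (mem_toSet.2 ⟨t, hp⟩)
    obtain ⟨j, hj⟩ := mem_toSet.1 hpZ
    have hrow : Z.row j = S.row t := by
      by_contra hne'
      exact Finset.disjoint_left.1 (Ioc_T_disjoint hne') (Z.cells_mem j hj) (S.cells_mem t hp)
    have : j = e t := Z.mono.injective (hrow.trans (he t).symm)
    rwa [this] at hj

lemma strictMono_fin_le {e : Fin k → Fin n} (he : StrictMono e) (t : Fin k) :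
    (t : ℕ) ≤ (e t : ℕ) := by
  have key : ∀ j, ∀ hj : j < k, j ≤ (e ⟨j, hj⟩ : ℕ) := by
    intro j
    induction j with
    | zero => simp
    | succ i ih =>
      intro hj
      have hi : i < k := by omega
      have h1 := ih hi
      have h2 : e ⟨i, hi⟩ < e ⟨i + 1, hj⟩ := he (by simp [Fin.lt_def])
      have h3 := Fin.lt_def.mp h2
      omega
  have := key t t.2
  simpa using this

/-- Sub-triangle of `Z` along a strictly monotone `e`, with arbitrarily chosen cells. -/
noncomputable def sub (Z : BTri m n) (e : Fin k → Fin n) (he : StrictMono e) : BTri m k where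
  row t := Z.row (e t)
  mono := Z.mono.comp he
  row_pos t := Z.row_pos _
  row_le t := Z.row_le _
  cells t := (Finset.exists_subset_card_eq (s := Z.cells (e t)) (n := (t : ℕ) + 1)
    (by rw [Z.card_cells]; exact Nat.succ_le_succ (strictMono_fin_le he t))).choose
  card_cells t := (Finset.exists_subset_card_eq (s := Z.cells (e t)) (n := (t : ℕ) + 1)
    (by rw [Z.card_cells]; exact Nat.succ_le_succ (strictMono_fin_le he t))).choose_spec.2
  cells_mem t := le_trans (Finset.exists_subset_card_eq (s := Z.cells (e t)) (n := (t : ℕ) + 1)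
    (by rw [Z.card_cells]; exact Nat.succ_le_succ (strictMono_fin_le he t))).choose_spec.1
    (Z.cells_mem (e t))

lemma sub_cells_subset (Z : BTri m n) (e : Fin k → Fin n) (he : StrictMono e) (t : Fin k) :
    (Z.sub e he).cells t ⊆ Z.cells (e t) :=
  (Finset.exists_subset_card_eq (s := Z.cells (e t)) (n := (t : ℕ) + 1)
    (by rw [Z.card_cells]; exact Nat.succ_le_succ (strictMono_fin_le he t))).choose_spec.1

lemma sub_le (Z : BTri m n) (e : Fin k → Fin n) (he : StrictMono e) : (Z.sub e he).le Z :=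
  ⟨e, he, fun t => Z.sub_cells_subset e he t⟩

lemma sub_toSet_subset (Z : BTri m n) (e : Fin k → Fin n) (he : StrictMono e) :
    (Z.sub e he).toSet ⊆ Z.toSet := by
  intro p hp
  obtain ⟨t, ht⟩ := mem_toSet.1 hp
  exact mem_toSet.2 ⟨e t, Z.sub_cells_subset e he t ht⟩

/-- The canonical `△_n` on a board with at least `n` levels. -/
def canonical (m n : ℕ) (h : n ≤ m) : BTri m n where
  row j := (j : ℕ) + 1
  mono := fun a b hab => by simpa using Fin.lt_def.mp hab
  row_pos j := by show 1 ≤ (j : ℕ) + 1; omega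
  row_le j := by show (j : ℕ) + 1 ≤ m; have := j.2; omega
  cells j := Finset.Ioc (T j) (T ((j : ℕ) + 1))
  card_cells j := card_Ioc_T _
  cells_mem j := by simp

end BTri

theorem ramsey (u : ℕ) (γ : Type) [Fintype γ] : ∀ s : ℕ,
    ∃ N, ∀ f : Finset ℕ → γ, ∀ V : Finset ℕ, N ≤ V.card →
      ∃ W, W ⊆ V ∧ s ≤ W.card ∧
        ∀ A, A ⊆ W → A.card = u → ∀ B, B ⊆ W → B.card = u → f A = f B := by
  classical
  induction u with
  | zero =>
    intro s
    refine ⟨s, fun f V hV => ?_⟩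
    obtain ⟨W, hWV, hWc⟩ := Finset.exists_subset_card_eq hV
    exact ⟨W, hWV, hWc.ge, fun A _ hA B _ hB => by
      rw [Finset.card_eq_zero.1 hA, Finset.card_eq_zero.1 hB]⟩
  | succ u ih =>
    have prehom : ∀ L : ℕ, ∃ N, ∀ f : Finset ℕ → γ, ∀ V : Finset ℕ, N ≤ V.card →
        ∃ W, W ⊆ V ∧ W.card = L ∧ ∃ c : ℕ → γ,
          ∀ A, A ⊆ W → A.card = u + 1 → ∀ h : A.Nonempty, f A = c (A.min' h) := by
      intro L
      induction L with
      | zero =>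
        refine ⟨0, fun f V _ => ⟨∅, Finset.empty_subset _, rfl, fun _ => f ∅, ?_⟩⟩
        intro A hA hcard h
        have : A = ∅ := Finset.subset_empty.1 hA
        simp [this] at hcard
      | succ L ihL =>
        obtain ⟨N₁, h₁⟩ := ihL
        obtain ⟨N₂, h₂⟩ := ih N₁
        refine ⟨N₂ + 1, fun f V hV => ?_⟩
        have hVne : V.Nonempty := Finset.card_pos.1 (by omega)
        set x := V.min' hVne with hxdef
        have hxV : x ∈ V := V.min'_mem hVne
        have hV' : N₂ ≤ (V.erase x).card := by rw [Finset.card_erase_of_mem hxV]; omega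
        obtain ⟨U, hUV', hUcard, hU⟩ := h₂ (fun A => f (insert x A)) (V.erase x) hV'
        obtain ⟨W', hW'U, hW'card, c', hc'⟩ := h₁ f U hUcard
        have hxW' : x ∉ W' := fun hx =>
          (Finset.notMem_erase x V) (hUV' (hW'U hx))
        set cx : γ := if hu : u ≤ U.card then
            f (insert x (Finset.exists_subset_card_eq hu).choose) else f ∅ with hcx
        refine ⟨insert x W', ?_, ?_, fun y => if y = x then cx else c' y, ?_⟩
        · intro y hy
          rcases Finset.mem_insert.1 hy with rfl | hy'
          · exact hxV
          · exact Finset.erase_subset _ _ (hUV' (hW'U hy'))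
        · rw [Finset.card_insert_of_notMem hxW', hW'card]
        · intro A hA hcard hne
          by_cases hxA : x ∈ A
          · have hA' : A.erase x ⊆ W' := by
              intro y hy
              have := hA (Finset.erase_subset _ _ hy)
              rcases Finset.mem_insert.1 this with rfl | h'
              · exact absurd rfl (Finset.ne_of_mem_erase hy)
              · exact h'
            have hcardA' : (A.erase x).card = u := by
              rw [Finset.card_erase_of_mem hxA]; omega
            have hu : u ≤ U.card := by
              rw [← hcardA']
              exact Finset.card_le_card (hA'.trans hW'U)
            have hfA : f A = f (insert x (A.erase x)) := by rw [Finset.insert_erase hxA]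
            have hgc : f (insert x (A.erase x)) = cx := by
              rw [hcx, dif_pos hu]
              exact hU (A.erase x) (hA'.trans hW'U) hcardA'
                (Finset.exists_subset_card_eq hu).choose
                (Finset.exists_subset_card_eq hu).choose_spec.1
                (Finset.exists_subset_card_eq hu).choose_spec.2
            have hmin : A.min' hne = x := by
              apply le_antisymm (Finset.min'_le A x hxA)
              apply Finset.le_min'
              intro y hy
              rcases Finset.mem_insert.1 (hA hy) with rfl | h'
              · exact le_rfl
              · exact Finset.min'_le V y (Finset.erase_subset _ _ (hUV' (hW'U h')))
            have hbeta : (fun y => if y = x then cx else c' y) (A.min' hne) = cx := by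
              rw [hmin]; simp
            rw [hbeta, hfA, hgc]
          · have hAW' : A ⊆ W' := fun y hy =>
              (Finset.mem_insert.1 (hA hy)).resolve_left (fun h => hxA (h ▸ hy))
            have hminne : A.min' hne ≠ x := fun h => hxA (h ▸ A.min'_mem hne)
            have hbeta : (fun y => if y = x then cx else c' y) (A.min' hne) = c' (A.min' hne) := by
              simp [hminne]
            rw [hbeta, hc' A hAW' hcard hne]
    intro s
    obtain ⟨N, hN⟩ := prehom (Fintype.card γ * s + 1)
    refine ⟨N, fun f V hV => ?_⟩
    obtain ⟨W, hWV, hWcard, c, hc⟩ := hN f V hV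
    have hex : ∃ v : γ, s ≤ (W.filter (fun y => c y = v)).card := by
      by_contra hcon
      push_neg at hcon
      have h1 : W.card = ∑ v ∈ Finset.univ (α := γ), (W.filter (fun y => c y = v)).card :=
        Finset.card_eq_sum_card_fiberwise (fun y _ => Finset.mem_univ (c y))
      have h2 : ∑ v ∈ Finset.univ (α := γ), (W.filter (fun y => c y = v)).card ≤
          Fintype.card γ * (s - 1) := by
        rw [← Finset.card_univ, ← smul_eq_mul]
        apply Finset.sum_le_card_nsmul
        intro v _
        have := hcon v
        omega
      rw [hWcard] at h1
      have h3 : Fintype.card γ * (s - 1) ≤ Fintype.card γ * s :=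
        Nat.mul_le_mul_left _ (Nat.sub_le s 1)
      omega
    obtain ⟨v, hv⟩ := hex
    refine ⟨W.filter (fun y => c y = v), (Finset.filter_subset _ _).trans hWV, hv, ?_⟩
    intro A hA hcardA B hB hcardB
    have hval : ∀ C, C ⊆ W.filter (fun y => c y = v) → C.card = u + 1 → f C = v := by
      intro C hC hcard
      have hne : C.Nonempty := Finset.card_pos.1 (by omega)
      rw [hc C (hC.trans (Finset.filter_subset _ _)) hcard hne]
      have := hC (C.min'_mem hne)
      exact (Finset.mem_filter.1 this).2
    rw [hval A hA hcardA, hval B hB hcardB]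

theorem ramsey' (u s r : ℕ) :
    ∃ N, ∀ (γ : Type) (_ : Fintype γ), Fintype.card γ ≤ r →
      ∀ f : Finset ℕ → γ, ∀ V : Finset ℕ, N ≤ V.card →
        ∃ W, W ⊆ V ∧ s ≤ W.card ∧
          ∀ A, A ⊆ W → A.card = u → ∀ B, B ⊆ W → B.card = u → f A = f B := by
  obtain ⟨N, hN⟩ := ramsey u (Fin r) s
  refine ⟨N, fun γ hγ hcard f V hV => ?_⟩
  have : Nonempty (γ ↪ Fin r) :=
    Function.Embedding.nonempty_of_card_le (by simpa using hcard)
  obtain ⟨ι⟩ := this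
  obtain ⟨W, hWV, hWcard, hW⟩ := hN (fun A => ι (f A)) V hV
  exact ⟨W, hWV, hWcard, fun A hA hcA B hB hcB => ι.injective (hW A hA hcA B hB hcB)⟩

theorem ramseyAll (cap s r : ℕ) :
    ∃ N, ∀ (γ : Type) (_ : Fintype γ), Fintype.card γ ≤ r →
      ∀ f : Finset ℕ → γ, ∀ V : Finset ℕ, N ≤ V.card →
        ∃ W, W ⊆ V ∧ s ≤ W.card ∧
          ∀ u, u ≤ cap → ∀ A, A ⊆ W → A.card = u → ∀ B, B ⊆ W → B.card = u → f A = f B := by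
  induction cap generalizing s with
  | zero =>
    obtain ⟨N, hN⟩ := ramsey' 0 s r
    refine ⟨N, fun γ hγ hcard f V hV => ?_⟩
    obtain ⟨W, hWV, hWcard, hW⟩ := hN γ hγ hcard f V hV
    refine ⟨W, hWV, hWcard, fun u hu => ?_⟩
    interval_cases u
    exact hW
  | succ cap ihc =>
    obtain ⟨N', h'⟩ := ihc s
    obtain ⟨N, hN⟩ := ramsey' (cap + 1) N' r
    refine ⟨N, fun γ hγ hcard f V hV => ?_⟩
    obtain ⟨W₁, hW₁V, hW₁card, hW₁⟩ := hN γ hγ hcard f V hV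
    obtain ⟨W, hWW₁, hWcard, hW⟩ := h' γ hγ hcard f W₁ hW₁card
    refine ⟨W, hWW₁.trans hW₁V, hWcard, fun u hu => ?_⟩
    rcases Nat.lt_succ_iff_lt_or_eq.1 (Nat.lt_succ_of_le hu) with h | rfl
    · exact hW u (by omega)
    · intro A hA hcA B hB hcB
      exact hW₁ A (hA.trans hWW₁) hcA B (hB.trans hWW₁) hcB

theorem uniformize (M cap s : ℕ) : ∀ r : ℕ,
    ∃ N, ∀ (γ₀ : Type) (_ : Fintype γ₀), Fintype.card γ₀ ≤ r →
      ∀ (χ : Finset ℕ → γ₀) (Q : Fin M → Finset ℕ), (∀ i, N ≤ (Q i).card) →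
        ∃ Q' : Fin M → Finset ℕ,
          (∀ i, Q' i ⊆ Q i) ∧ (∀ i, s ≤ (Q' i).card) ∧
          ∀ B B' : Fin M → Finset ℕ, (∀ i, B i ⊆ Q' i) → (∀ i, B' i ⊆ Q' i) →
            (∀ i, (B i).card = (B' i).card) → (∀ i, (B i).card ≤ cap) →
            χ (Finset.univ.biUnion B) = χ (Finset.univ.biUnion B') := by
  induction M with
  | zero =>
    intro r
    refine ⟨0, fun γ₀ _ _ χ Q _ => ⟨Q, fun i => Finset.Subset.refl _, fun i => i.elim0,
      fun B B' _ _ _ _ => ?_⟩⟩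
    simp [Finset.univ_eq_empty]
  | succ M ihM =>
    intro r
    obtain ⟨N', ihN'⟩ := ihM (r ^ (2 ^ s))
    obtain ⟨N₀, hN₀⟩ := ramseyAll cap s (r ^ (2 ^ (N' * M)))
    refine ⟨max N₀ N', fun γ₀ hγ₀ hcard χ Q hQ => ?_⟩
    classical
    -- truncate the tail factors to exactly N'
    have htr : ∀ j : Fin M, ∃ Qt, Qt ⊆ Q j.succ ∧ Qt.card = N' := fun j =>
      Finset.exists_subset_card_eq (le_trans (le_max_right _ _) (hQ j.succ))
    choose Qt hQtsub hQtcard using htr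
    -- Ramsey for factor 0
    have hcardConf :
        Fintype.card ((∀ j : Fin M, {A : Finset ℕ // A ∈ (Qt j).powerset}) → γ₀) ≤
          r ^ (2 ^ (N' * M)) := by
      rw [Fintype.card_fun]
      have h1 : Fintype.card (∀ j : Fin M, {A : Finset ℕ // A ∈ (Qt j).powerset}) =
          2 ^ (N' * M) := by
        rw [Fintype.card_pi]
        have : ∀ j : Fin M, Fintype.card {A : Finset ℕ // A ∈ (Qt j).powerset} = 2 ^ N' := by
          intro j
          rw [Fintype.card_coe, Finset.card_powerset, hQtcard]
        rw [Finset.prod_congr rfl (fun j _ => this j), Finset.prod_const, Finset.card_univ,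
          Fintype.card_fin, ← pow_mul]
      rw [h1]
      exact Nat.pow_le_pow_left hcard _
    obtain ⟨W, hWQ0, hWcard, hW⟩ := hN₀ _ inferInstance hcardConf
      (fun A => fun conf : (∀ j : Fin M, {A : Finset ℕ // A ∈ (Qt j).powerset}) =>
        χ (A ∪ Finset.univ.biUnion (fun j => (conf j : Finset ℕ))))
      (Q 0) (le_trans (le_max_left _ _) (hQ 0))
    obtain ⟨Wt, hWtW, hWtcard⟩ := Finset.exists_subset_card_eq hWcard
    -- IH for the tail factors
    have hcard' : Fintype.card ({b : Finset ℕ // b ∈ Wt.powerset} → γ₀) ≤ r ^ 2 ^ s := by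
      rw [Fintype.card_fun, Fintype.card_coe, Finset.card_powerset, hWtcard]
      exact Nat.pow_le_pow_left hcard _
    obtain ⟨Q'', hQ''sub, hQ''card, hUnif⟩ := ihN' _ inferInstance hcard'
      (fun X => fun b : {b : Finset ℕ // b ∈ Wt.powerset} => χ ((b : Finset ℕ) ∪ X))
      Qt (fun j => ge_of_eq (hQtcard j))
    refine ⟨Fin.cases Wt Q'', ?_, ?_, ?_⟩
    · intro i
      induction i using Fin.cases with
      | zero => simpa using hWtW.trans hWQ0
      | succ j => simpa using (hQ''sub j).trans (hQtsub j)
    · intro i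
      induction i using Fin.cases with
      | zero => simp [hWtcard]
      | succ j => simpa using hQ''card j
    · intro B B' hB hB' hcards hcap
      have hB0 : B 0 ⊆ Wt := by simpa using hB 0
      have hB'0 : B' 0 ⊆ Wt := by simpa using hB' 0
      have hBs : ∀ j : Fin M, B j.succ ⊆ Q'' j := fun j => by simpa using hB j.succ
      have hB's : ∀ j : Fin M, B' j.succ ⊆ Q'' j := fun j => by simpa using hB' j.succ
      have hsplit : ∀ C : Fin (M + 1) → Finset ℕ,
          Finset.univ.biUnion C = C 0 ∪ Finset.univ.biUnion (fun j : Fin M => C j.succ) := by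
        intro C
        ext p
        simp only [Finset.mem_biUnion, Finset.mem_union, Finset.mem_univ, true_and]
        constructor
        · rintro ⟨i, hi⟩
          induction i using Fin.cases with
          | zero => exact Or.inl hi
          | succ j => exact Or.inr ⟨j, hi⟩
        · rintro (h | ⟨j, hj⟩)
          · exact ⟨0, h⟩
          · exact ⟨j.succ, hj⟩
      have h1 : χ (B 0 ∪ Finset.univ.biUnion (fun j : Fin M => B j.succ)) =
          χ (B' 0 ∪ Finset.univ.biUnion (fun j : Fin M => B j.succ)) := by
        have heq := hW (B 0).card (hcap 0) (B 0) (hB0.trans hWtW) rfl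
          (B' 0) (hB'0.trans hWtW) (hcards 0).symm
        exact congrFun heq (fun j => ⟨B j.succ, Finset.mem_powerset.2 ((hBs j).trans (hQ''sub j))⟩)
      have h2 : χ (B' 0 ∪ Finset.univ.biUnion (fun j : Fin M => B j.succ)) =
          χ (B' 0 ∪ Finset.univ.biUnion (fun j : Fin M => B' j.succ)) := by
        have heq := hUnif (fun j => B j.succ) (fun j => B' j.succ) hBs hB's
          (fun j => hcards j.succ) (fun j => hcap j.succ)
        exact congrFun heq ⟨B' 0, Finset.mem_powerset.2 hB'0⟩
      rw [hsplit B, hsplit B', h1, h2]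

theorem R1_set_nonempty (n k : ℕ) (hk : 1 ≤ k) (hkn : k ≤ n) :
    ∃ m, max n n ≤ m ∧ ∀ χ : Finset ℕ → Bool,
      (∃ Z : BTri m n, ∀ S : BTri m k, S.le Z → χ S.toSet = true) ∨
      (∃ Z : BTri m n, ∀ S : BTri m k, S.le Z → χ S.toSet = false) := by
  classical
  have hn : 1 ≤ n := hk.trans hkn
  obtain ⟨M, hM⟩ := ramsey k Bool n
  obtain ⟨N₀, hN₀⟩ := uniformize M n n 2
  set base := max N₀ n with hbase
  have hbase1 : 1 ≤ base := le_trans hn (le_max_right _ _)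
  refine ⟨base + M, by simp; omega, fun χ => ?_⟩
  set m := base + M with hm
  set Q : Fin M → Finset ℕ :=
    fun i => Finset.Ioc (T (base + (i : ℕ) - 1)) (T (base + (i : ℕ))) with hQ
  have hQcard : ∀ i, (Q i).card = base + (i : ℕ) := fun i => card_Ioc_T' (by omega)
  obtain ⟨Q', hsub, hcardQ', hUnif⟩ := hN₀ Bool inferInstance (by simp) χ Q
    (fun i => by rw [hQcard]; have : N₀ ≤ base := le_max_left _ _; omega)
  -- canonical picks of subsets inside the uniformized blocks
  have hpickex : ∀ (i : Fin M) (t : ℕ), t ≤ n → ∃ P, P ⊆ Q' i ∧ P.card = t := fun i t ht =>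
    Finset.exists_subset_card_eq (ht.trans (hcardQ' i))
  set pick : Fin M → ℕ → Finset ℕ := fun i t =>
    if h : t ≤ n then (hpickex i t h).choose else ∅ with hpickdef
  have hpick : ∀ (i : Fin M) (t : ℕ) (ht : t ≤ n), pick i t ⊆ Q' i ∧ (pick i t).card = t := by
    intro i t ht
    rw [hpickdef]
    simp only [dif_pos ht]
    exact (hpickex i t ht).choose_spec
  set pickN : ℕ → ℕ → Finset ℕ :=
    fun a t => if ha : a < M then pick ⟨a, ha⟩ t else ∅ with hpickN
  set rowf : Finset ℕ → Bool := fun A =>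
    if h : A.card = k then
      χ (Finset.univ.biUnion (fun t : Fin k => pickN ((A.orderEmbOfFin h) t) ((t : ℕ) + 1)))
    else true with hrowf
  obtain ⟨W, hWrange, hWcard, hconst⟩ := hM rowf (Finset.range M) (by simp)
  obtain ⟨Rn, hRnW, hRncard⟩ := Finset.exists_subset_card_eq hWcard
  set remb := Rn.orderEmbOfFin hRncard with hremb
  have hRmem : ∀ j : Fin n, remb j ∈ Rn := fun j => Finset.orderEmbOfFin_mem Rn hRncard j
  have hRlt : ∀ j : Fin n, remb j < M := fun j =>
    Finset.mem_range.1 (hWrange (hRnW (hRmem j)))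
  set idx : Fin n → Fin M := fun j => ⟨remb j, hRlt j⟩ with hidx
  -- the monochromatic triangle
  set Z : BTri m n :=
    { row := fun j => base + remb j
      mono := fun a b hab => by
        show base + remb a < base + remb b
        have := remb.strictMono hab; omega
      row_pos := fun j => by show 1 ≤ base + remb j; omega
      row_le := fun j => by show base + remb j ≤ m; have := hRlt j; omega
      cells := fun j => pick (idx j) ((j : ℕ) + 1)
      card_cells := fun j => (hpick (idx j) _ (by have := j.2; omega)).2
      cells_mem := fun j => ((hpick (idx j) _ (by have := j.2; omega)).1.trans
        (hsub (idx j)) : _) } with hZ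
  -- key uniformity transfer
  have hkey : ∀ (u v : Fin k → Finset ℕ) (ρ : Fin k → Fin M), Function.Injective ρ →
      (∀ t, u t ⊆ Q' (ρ t)) → (∀ t, v t ⊆ Q' (ρ t)) →
      (∀ t, (u t).card = (v t).card) → (∀ t, (u t).card ≤ n) → (∀ t, (v t).card ≤ n) →
      χ (Finset.univ.biUnion u) = χ (Finset.univ.biUnion v) := by
    intro u v ρ hρ hu hv hcards hucap hvcap
    set B : Fin M → Finset ℕ :=
      fun i => Finset.univ.biUnion (fun t : Fin k => if ρ t = i then u t else ∅) with hB
    set B' : Fin M → Finset ℕ :=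
      fun i => Finset.univ.biUnion (fun t : Fin k => if ρ t = i then v t else ∅) with hB'
    have hBval : ∀ t, B (ρ t) = u t := by
      intro t
      rw [hB]
      ext p
      simp only [Finset.mem_biUnion, Finset.mem_univ, true_and]
      constructor
      · rintro ⟨t', ht'⟩
        by_cases h : ρ t' = ρ t
        · rw [if_pos h] at ht'; rwa [hρ h] at ht'
        · rw [if_neg h] at ht'; exact absurd ht' (Finset.notMem_empty p)
      · intro hp; exact ⟨t, by rw [if_pos rfl]; exact hp⟩
    have hB'val : ∀ t, B' (ρ t) = v t := by
      intro t
      rw [hB']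
      ext p
      simp only [Finset.mem_biUnion, Finset.mem_univ, true_and]
      constructor
      · rintro ⟨t', ht'⟩
        by_cases h : ρ t' = ρ t
        · rw [if_pos h] at ht'; rwa [hρ h] at ht'
        · rw [if_neg h] at ht'; exact absurd ht' (Finset.notMem_empty p)
      · intro hp; exact ⟨t, by rw [if_pos rfl]; exact hp⟩
    have hBempty : ∀ i, (¬ ∃ t, ρ t = i) → B i = ∅ := by
      intro i hi
      rw [hB]
      apply Finset.eq_empty_of_forall_notMem
      intro p hp
      obtain ⟨t, ht⟩ := Finset.mem_biUnion.1 hp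
      by_cases h : ρ t = i
      · exact hi ⟨t, h⟩
      · rw [if_neg h] at ht; exact Finset.notMem_empty p ht.2
    have hB'empty : ∀ i, (¬ ∃ t, ρ t = i) → B' i = ∅ := by
      intro i hi
      rw [hB']
      apply Finset.eq_empty_of_forall_notMem
      intro p hp
      obtain ⟨t, ht⟩ := Finset.mem_biUnion.1 hp
      by_cases h : ρ t = i
      · exact hi ⟨t, h⟩
      · rw [if_neg h] at ht; exact Finset.notMem_empty p ht.2
    have hmain := hUnif B B' ?_ ?_ ?_ ?_
    · have hBu : Finset.univ.biUnion B = Finset.univ.biUnion u := by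
        ext p
        simp only [Finset.mem_biUnion, Finset.mem_univ, true_and]
        constructor
        · rintro ⟨i, hi⟩
          by_cases h : ∃ t, ρ t = i
          · obtain ⟨t, rfl⟩ := h
            rw [hBval t] at hi
            exact ⟨t, hi⟩
          · rw [hBempty i h] at hi; exact absurd hi (Finset.notMem_empty p)
        · rintro ⟨t, ht⟩
          exact ⟨ρ t, by rw [hBval t]; exact ht⟩
      have hB'v : Finset.univ.biUnion B' = Finset.univ.biUnion v := by
        ext p
        simp only [Finset.mem_biUnion, Finset.mem_univ, true_and]
        constructor
        · rintro ⟨i, hi⟩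
          by_cases h : ∃ t, ρ t = i
          · obtain ⟨t, rfl⟩ := h
            rw [hB'val t] at hi
            exact ⟨t, hi⟩
          · rw [hB'empty i h] at hi; exact absurd hi (Finset.notMem_empty p)
        · rintro ⟨t, ht⟩
          exact ⟨ρ t, by rw [hB'val t]; exact ht⟩
      rwa [hBu, hB'v] at hmain
    · intro i
      by_cases h : ∃ t, ρ t = i
      · obtain ⟨t, rfl⟩ := h; rw [hBval t]; exact hu t
      · rw [hBempty i h]; exact Finset.empty_subset _
    · intro i
      by_cases h : ∃ t, ρ t = i
      · obtain ⟨t, rfl⟩ := h; rw [hB'val t]; exact hv t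
      · rw [hB'empty i h]; exact Finset.empty_subset _
    · intro i
      by_cases h : ∃ t, ρ t = i
      · obtain ⟨t, rfl⟩ := h; rw [hBval t, hB'val t]; exact hcards t
      · rw [hBempty i h, hB'empty i h]
    · intro i
      by_cases h : ∃ t, ρ t = i
      · obtain ⟨t, rfl⟩ := h; rw [hBval t]; exact hucap t
      · rw [hBempty i h]; simp
  -- the constant colour
  set A₀ : Finset ℕ := Finset.image (fun t : Fin k => remb (Fin.castLE hkn t)) Finset.univ
    with hA₀
  have hA₀card : A₀.card = k := by
    have hinj : Function.Injective (fun t : Fin k => remb (Fin.castLE hkn t)) :=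
      fun a b hab => Fin.castLE_injective hkn (remb.injective hab)
    rw [hA₀, Finset.card_image_of_injective _ hinj, Finset.card_univ, Fintype.card_fin]
  have hA₀W : A₀ ⊆ W := by
    rw [hA₀]
    intro p hp
    obtain ⟨t, -, rfl⟩ := Finset.mem_image.1 hp
    exact hRnW (hRmem _)
  set vcol := rowf A₀ with hvcol
  have claim : ∀ S : BTri m k, S.le Z → χ S.toSet = vcol := by
    rintro S ⟨e, he, hecells⟩
    set A : Finset ℕ := Finset.image (fun t : Fin k => remb (e t)) Finset.univ with hA
    have hAcard : A.card = k := by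
      have hinj : Function.Injective (fun t : Fin k => remb (e t)) :=
        fun a b hab => he.injective (remb.injective hab)
      rw [hA, Finset.card_image_of_injective _ hinj, Finset.card_univ, Fintype.card_fin]
    have hAW : A ⊆ W := by
      rw [hA]
      intro p hp
      obtain ⟨t, -, rfl⟩ := Finset.mem_image.1 hp
      exact hRnW (hRmem _)
    have hAemb : ∀ t : Fin k, (A.orderEmbOfFin hAcard) t = remb (e t) := by
      have := Finset.orderEmbOfFin_unique hAcard
        (f := fun t : Fin k => remb (e t)) (fun t => by
          rw [hA]; exact Finset.mem_image.2 ⟨t, Finset.mem_univ t, rfl⟩)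
        (fun a b hab => remb.strictMono (he hab))
      intro t
      exact (congrFun this t).symm
    have hrowfA : rowf A =
        χ (Finset.univ.biUnion (fun t : Fin k => pick (idx (e t)) ((t : ℕ) + 1))) := by
      have hb : (fun t : Fin k => pickN ((A.orderEmbOfFin hAcard) t) ((t : ℕ) + 1)) =
          fun t : Fin k => pick (idx (e t)) ((t : ℕ) + 1) := by
        funext t
        rw [hAemb t]
        rw [hpickN]
        try simp only [dif_pos (hRlt (e t))]
        try rfl
      simp only [hrowf]
      first
      | rw [dif_pos hAcard, hb]
      | rw [dif_pos hAcard]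
    have hstep : χ S.toSet =
        χ (Finset.univ.biUnion (fun t : Fin k => pick (idx (e t)) ((t : ℕ) + 1))) := by
      show χ (Finset.univ.biUnion S.cells) = _
      apply hkey S.cells _ (fun t => idx (e t))
      · intro a b hab
        have h1 : remb (e a) = remb (e b) := congrArg Fin.val hab
        exact he.injective (remb.injective h1)
      · intro t
        refine (hecells t).trans ?_
        have hzc : Z.cells (e t) = pick (idx (e t)) (((e t) : ℕ) + 1) := rfl
        rw [hzc]
        exact (hpick (idx (e t)) _ (by have := (e t).2; omega)).1
      · intro t
        exact (hpick (idx (e t)) _ (by have := t.2; omega)).1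
      · intro t
        rw [S.card_cells t, (hpick (idx (e t)) _ (by have := t.2; omega)).2]
      · intro t
        rw [S.card_cells t]
        have := t.2
        omega
      · intro t
        rw [(hpick (idx (e t)) _ (by have := t.2; omega)).2]
        have := t.2
        omega
    rw [hstep, ← hrowfA, hvcol]
    exact hconst A hAW hAcard A₀ hA₀W hA₀card
  cases hv : vcol with
  | true => exact Or.inl ⟨Z, fun S hS => by rw [claim S hS, hv]⟩
  | false => exact Or.inr ⟨Z, fun S hS => by rw [claim S hS, hv]⟩

theorem counting (n k m : ℕ) (hk : 1 ≤ k) (hkn : k ≤ n) (hnm : n ≤ m)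
    (hprop : ∀ χ : Finset ℕ → Bool,
      (∃ Z : BTri m n, ∀ S : BTri m k, S.le Z → χ S.toSet = true) ∨
      (∃ Z : BTri m n, ∀ S : BTri m k, S.le Z → χ S.toSet = false)) :
    2 ^ (n.choose k - 1) ≤ (T m).choose (T n) := by
  classical
  set 𝒦 : Finset (Finset ℕ) := (Finset.Ioc 0 (T m)).powerset with hK
  have hmemK : ∀ S : BTri m k, S.toSet ∈ 𝒦 := fun S => Finset.mem_powerset.2 S.toSet_subset
  set P : Finset ℕ → Finset {x // x ∈ 𝒦} := fun A =>
    Finset.univ.filter (fun x => ∃ S : BTri m k, S.toSet = (x : Finset ℕ) ∧ (x : Finset ℕ) ⊆ A)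
    with hP
  set E : Finset ℕ → Bool → Finset ({x // x ∈ 𝒦} → Bool) := fun A c =>
    Finset.univ.filter (fun ω => ∀ x ∈ P A, ω x = c) with hE
  set 𝒵 : Finset (Finset ℕ) :=
    ((Finset.Ioc 0 (T m)).powerset).filter (fun A => ∃ Z : BTri m n, Z.toSet = A) with hZs
  -- every colouring is covered by some monochromatic event
  have hcover : ∀ ω : {x // x ∈ 𝒦} → Bool, ∃ A ∈ 𝒵, ω ∈ E A true ∨ ω ∈ E A false := by
    intro ω
    set χ : Finset ℕ → Bool := fun A => if h : A ∈ 𝒦 then ω ⟨A, h⟩ else true with hχ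
    have hform : ∀ (Z : BTri m n) (c : Bool), (∀ S : BTri m k, S.le Z → χ S.toSet = c) →
        Z.toSet ∈ 𝒵 ∧ ω ∈ E Z.toSet c := by
      intro Z c hc
      refine ⟨Finset.mem_filter.2 ⟨Finset.mem_powerset.2 Z.toSet_subset, Z, rfl⟩, ?_⟩
      rw [hE]
      refine Finset.mem_filter.2 ⟨Finset.mem_univ _, ?_⟩
      intro x hx
      rw [hP] at hx
      obtain ⟨-, S, hSx, hsub⟩ := Finset.mem_filter.1 hx
      have hle : S.le Z := BTri.le_of_toSet_subset (by rw [hSx]; exact hsub)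
      have h1 : χ S.toSet = c := hc S hle
      have h2 : χ S.toSet = ω ⟨S.toSet, hmemK S⟩ := by
        simp only [hχ]
        rw [dif_pos (hmemK S)]
      have hx2 : x = ⟨S.toSet, hmemK S⟩ := Subtype.ext hSx.symm
      rw [hx2, ← h2, h1]
    rcases hprop χ with ⟨Z, hZ⟩ | ⟨Z, hZ⟩
    · exact ⟨Z.toSet, (hform Z true hZ).1, Or.inl (hform Z true hZ).2⟩
    · exact ⟨Z.toSet, (hform Z false hZ).1, Or.inr (hform Z false hZ).2⟩
  -- each event pins down at least `n.choose k` coordinates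
  have hPcard : ∀ A, A ∈ 𝒵 → n.choose k ≤ (P A).card := by
    intro A hA
    obtain ⟨-, Z, hZA⟩ := Finset.mem_filter.1 hA
    set F : Finset (Fin n) → {x // x ∈ 𝒦} := fun E' =>
      if h : E'.card = k then
        ⟨(Z.sub (fun t => (E'.orderEmbOfFin h) t) (fun a b hab =>
            (E'.orderEmbOfFin h).strictMono hab)).toSet, hmemK _⟩
      else ⟨∅, Finset.mem_powerset.2 (Finset.empty_subset _)⟩ with hF
    have hcard0 : ((Finset.univ : Finset (Fin n)).powersetCard k).card = n.choose k := by
      rw [Finset.card_powersetCard, Finset.card_univ, Fintype.card_fin]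
    rw [← hcard0]
    apply Finset.card_le_card_of_injOn F
    · intro E' hE'
      have hEk : E'.card = k := (Finset.mem_powersetCard.1 hE').2
      rw [hF]
      simp only [dif_pos hEk]
      rw [hP]
      refine Finset.mem_filter.2 ⟨Finset.mem_univ _, Z.sub _ _, rfl, ?_⟩
      rw [← hZA]
      exact Z.sub_toSet_subset _ _
    · intro E₁ hE₁ E₂ hE₂ hFeq
      have h₁ : E₁.card = k := (Finset.mem_powersetCard.1 hE₁).2
      have h₂ : E₂.card = k := (Finset.mem_powersetCard.1 hE₂).2
      rw [hF] at hFeq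
      simp only [dif_pos h₁, dif_pos h₂] at hFeq
      have hteq :
          (Z.sub (fun t => (E₁.orderEmbOfFin h₁) t) (fun a b hab =>
            (E₁.orderEmbOfFin h₁).strictMono hab)).toSet =
          (Z.sub (fun t => (E₂.orderEmbOfFin h₂) t) (fun a b hab =>
            (E₂.orderEmbOfFin h₂).strictMono hab)).toSet :=
        congrArg Subtype.val hFeq
      -- E₁ ⊆ E₂
      have hsub12 : E₁ ⊆ E₂ := by
        intro j hj
        have hjr : (j : Fin n) ∈ Set.range (E₁.orderEmbOfFin h₁) := by
          rw [Finset.range_orderEmbOfFin]; exact hj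
        obtain ⟨t, rfl⟩ := hjr
        set S₁ := Z.sub (fun t => (E₁.orderEmbOfFin h₁) t) (fun a b hab =>
            (E₁.orderEmbOfFin h₁).strictMono hab)
        set S₂ := Z.sub (fun t => (E₂.orderEmbOfFin h₂) t) (fun a b hab =>
            (E₂.orderEmbOfFin h₂).strictMono hab)
        have hne : (S₁.cells t).Nonempty :=
          Finset.card_pos.1 (by rw [S₁.card_cells]; omega)
        obtain ⟨p, hp⟩ := hne
        have hp2 : p ∈ S₂.toSet := by
          rw [← hteq]
          exact BTri.mem_toSet.2 ⟨t, hp⟩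
        obtain ⟨t', ht'⟩ := BTri.mem_toSet.1 hp2
        have hpz1 : p ∈ Z.cells ((E₁.orderEmbOfFin h₁) t) :=
          Z.sub_cells_subset _ _ t hp
        have hpz2 : p ∈ Z.cells ((E₂.orderEmbOfFin h₂) t') :=
          Z.sub_cells_subset _ _ t' ht'
        have heq' : (E₁.orderEmbOfFin h₁) t = (E₂.orderEmbOfFin h₂) t' := by
          by_contra hcon
          exact Finset.disjoint_left.1 (Z.cells_disjoint hcon) hpz1 hpz2
        rw [heq']
        exact Finset.orderEmbOfFin_mem E₂ h₂ t'
      exact Finset.eq_of_subset_of_card_le hsub12 (by omega)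
  -- cardinality of each event
  have hEcard : ∀ A c, A ∈ 𝒵 → (E A c).card ≤ 2 ^ (𝒦.card - n.choose k) := by
    intro A c hA
    have hstep : (E A c).card ≤ 2 ^ (𝒦.card - (P A).card) := by
      have hcard2 : 2 ^ (𝒦.card - (P A).card) =
          Fintype.card ({y : {x // x ∈ 𝒦} // y ∉ P A} → Bool) := by
        rw [Fintype.card_fun, Fintype.card_bool]
        congr 1
        have hc1 : Fintype.card {y : {x // x ∈ 𝒦} // y ∈ P A} = (P A).card :=
          Fintype.card_coe _
        have hc2 : Fintype.card {x // x ∈ 𝒦} = 𝒦.card := Fintype.card_coe _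
        have := Fintype.card_subtype_compl (fun y : {x // x ∈ 𝒦} => y ∈ P A)
        rw [this, hc1, hc2]
      rw [hcard2, ← Finset.card_univ]
      apply Finset.card_le_card_of_injOn (fun ω => fun y => ω y.1)
      · intro ω _; exact Finset.mem_univ _
      · intro ω₁ hω₁ ω₂ hω₂ heq
        have hm₁ := (Finset.mem_filter.1 hω₁).2
        have hm₂ := (Finset.mem_filter.1 hω₂).2
        funext x
        by_cases hx : x ∈ P A
        · rw [hm₁ x hx, hm₂ x hx]
        · exact congrFun heq ⟨x, hx⟩
    refine hstep.trans (Nat.pow_le_pow_right (by omega) ?_)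
    have := hPcard A hA
    omega
  -- union bound
  have hKcard : Fintype.card ({x // x ∈ 𝒦} → Bool) = 2 ^ 𝒦.card := by
    rw [Fintype.card_fun, Fintype.card_bool, Fintype.card_coe]
  have hunion : 2 ^ 𝒦.card ≤ 𝒵.card * (2 ^ (𝒦.card - n.choose k) + 2 ^ (𝒦.card - n.choose k)) := by
    rw [← hKcard, ← Finset.card_univ]
    have hsub : (Finset.univ : Finset ({x // x ∈ 𝒦} → Bool)) ⊆
        𝒵.biUnion (fun A => E A true ∪ E A false) := by
      intro ω _
      obtain ⟨A, hA, h⟩ := hcover ω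
      exact Finset.mem_biUnion.2 ⟨A, hA, Finset.mem_union.2 h⟩
    refine (Finset.card_le_card hsub).trans ((Finset.card_biUnion_le).trans ?_)
    rw [← smul_eq_mul]
    apply Finset.sum_le_card_nsmul
    intro A hA
    exact (Finset.card_union_le _ _).trans
      (Nat.add_le_add (hEcard A true hA) (hEcard A false hA))
  -- |𝒵| bounds
  have hZZ : 𝒵.card ≤ (T m).choose (T n) := by
    have hsub : 𝒵 ⊆ (Finset.Ioc 0 (T m)).powersetCard (T n) := by
      intro A hA
      obtain ⟨-, Z, rfl⟩ := Finset.mem_filter.1 hA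
      exact Finset.mem_powersetCard.2 ⟨Z.toSet_subset, Z.card_toSet⟩
    refine (Finset.card_le_card hsub).trans ?_
    rw [Finset.card_powersetCard, Nat.card_Ioc]
    simp
  -- nonemptiness gives `n.choose k ≤ 𝒦.card`
  have hA₀ : (BTri.canonical m n hnm).toSet ∈ 𝒵 :=
    Finset.mem_filter.2 ⟨Finset.mem_powerset.2 (BTri.canonical m n hnm).toSet_subset,
      BTri.canonical m n hnm, rfl⟩
  have hNK : n.choose k ≤ 𝒦.card := by
    refine (hPcard _ hA₀).trans ?_
    calc (P (BTri.canonical m n hnm).toSet).card ≤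
        (Finset.univ : Finset {x // x ∈ 𝒦}).card := Finset.card_le_card (Finset.subset_univ _)
      _ = 𝒦.card := by rw [Finset.card_univ, Fintype.card_coe]
  have hN1 : 1 ≤ n.choose k := Nat.choose_pos hkn
  -- final arithmetic
  set K := 𝒦.card
  set N := n.choose k
  have hexp : 2 ^ K = 2 ^ (N - 1) * 2 ^ (K - N + 1) := by
    rw [← pow_add]
    congr 1
    omega
  have h2 : (2:ℕ) ^ (K - N) + 2 ^ (K - N) = 2 ^ (K - N + 1) := by
    rw [pow_succ]; ring
  rw [h2] at hunion
  rw [hexp] at hunion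
  have hpos : 0 < 2 ^ (K - N + 1) := pow_pos (by omega) _
  exact (Nat.le_of_mul_le_mul_right hunion hpos).trans hZZ

lemma pow_le_kpow_mul_choose : ∀ (k n : ℕ), k ≤ n →
    (n : ℝ) ^ k ≤ (k : ℝ) ^ k * (n.choose k : ℝ) := by
  intro k
  induction k with
  | zero => intro n _; simp
  | succ k ih =>
    intro n hn
    have hn1 : 1 ≤ n := by omega
    have hk1n : (k : ℝ) + 1 ≤ (n : ℝ) := by exact_mod_cast hn
    have hid : (n : ℝ) * ((n - 1).choose k : ℝ) = ((k : ℝ) + 1) * (n.choose (k + 1) : ℝ) := by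
      have h := Nat.add_one_mul_choose_eq (n - 1) k
      have hn' : n - 1 + 1 = n := by omega
      rw [hn'] at h
      have h' : (n : ℝ) * ((n - 1).choose k : ℝ) = (n.choose (k + 1) : ℝ) * ((k : ℝ) + 1) := by
        exact_mod_cast h
      rw [h']; ring
    have hIH := ih (n - 1) (by omega)
    have hcast : ((n - 1 : ℕ) : ℝ) = (n : ℝ) - 1 := by
      rw [Nat.cast_sub hn1, Nat.cast_one]
    rw [hcast] at hIH
    have hkkpos : (0 : ℝ) < (k : ℝ) ^ k := by
      rcases Nat.eq_zero_or_pos k with rfl | hkp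
      · norm_num
      · exact pow_pos (by exact_mod_cast hkp) _
    have hnpos : (0 : ℝ) ≤ (n : ℝ) := by positivity
    have h1 : ((n : ℝ) * k) ^ k ≤ (((k : ℝ) + 1) * ((n : ℝ) - 1)) ^ k := by
      apply pow_le_pow_left₀ (by positivity)
      nlinarith
    have key : (n : ℝ) ^ (k + 1) * (k : ℝ) ^ k ≤
        ((k : ℝ) + 1) ^ (k + 1) * (n.choose (k + 1) : ℝ) * (k : ℝ) ^ k := by
      have e1 : (n : ℝ) ^ (k + 1) * (k : ℝ) ^ k = (n : ℝ) * ((n : ℝ) * k) ^ k := by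
        rw [mul_pow]; ring
      have e2 : ((k : ℝ) + 1) ^ (k + 1) * (n.choose (k + 1) : ℝ) * (k : ℝ) ^ k =
          ((k : ℝ) + 1) ^ k * ((n : ℝ) * ((n - 1).choose k : ℝ)) * (k : ℝ) ^ k := by
        rw [hid]; ring
      rw [e1, e2]
      calc (n : ℝ) * ((n : ℝ) * k) ^ k
          ≤ (n : ℝ) * (((k : ℝ) + 1) * ((n : ℝ) - 1)) ^ k :=
            mul_le_mul_of_nonneg_left h1 hnpos
        _ = (n : ℝ) * (((k : ℝ) + 1) ^ k * ((n : ℝ) - 1) ^ k) := by rw [mul_pow]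
        _ ≤ (n : ℝ) * (((k : ℝ) + 1) ^ k * ((k : ℝ) ^ k * ((n - 1).choose k : ℝ))) := by
            apply mul_le_mul_of_nonneg_left _ hnpos
            exact mul_le_mul_of_nonneg_left hIH (by positivity)
        _ = ((k : ℝ) + 1) ^ k * ((n : ℝ) * ((n - 1).choose k : ℝ)) * (k : ℝ) ^ k := by ring
    have hc : ((k + 1 : ℕ) : ℝ) = (k : ℝ) + 1 := by push_cast; ring
    rw [hc]
    exact le_of_mul_le_mul_right key hkkpos

lemma div_pow_le_choose (k n : ℕ) (hk : 1 ≤ k) (hkn : k ≤ n) :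
    ((n : ℝ) / (k : ℝ)) ^ k ≤ (n.choose k : ℝ) := by
  have hkk : (0 : ℝ) < (k : ℝ) ^ k := pow_pos (by exact_mod_cast hk) _
  rw [div_pow, div_le_iff₀ hkk]
  exact (pow_le_kpow_mul_choose k n hkn).trans_eq (mul_comm _ _)

lemma stirling_bound (u : ℕ) (hu : 1 ≤ u) :
    Real.sqrt (2 * Real.pi * u) * ((u : ℝ) / Real.exp 1) ^ u ≤ (Nat.factorial u : ℝ) := by
  obtain ⟨s, rfl⟩ : ∃ s, s + 1 = u := ⟨u - 1, by omega⟩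
  have h1 : Real.sqrt Real.pi ≤ Stirling.stirlingSeq (s + 1) :=
    Stirling.stirlingSeq'_antitone.le_of_tendsto
      (Stirling.tendsto_stirlingSeq_sqrt_pi.comp (Filter.tendsto_add_atTop_nat 1)) s
  rw [Stirling.stirlingSeq] at h1
  have hpos : 0 < Real.sqrt (2 * ((s + 1 : ℕ) : ℝ)) *
      (((s + 1 : ℕ) : ℝ) / Real.exp 1) ^ (s + 1) := by
    have : (0 : ℝ) < ((s + 1 : ℕ) : ℝ) := by positivity
    positivity
  rw [le_div_iff₀ hpos] at h1
  have hsplit : Real.sqrt (2 * Real.pi * ((s + 1 : ℕ) : ℝ)) =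
      Real.sqrt Real.pi * Real.sqrt (2 * ((s + 1 : ℕ) : ℝ)) := by
    rw [← Real.sqrt_mul Real.pi_nonneg]
    congr 1
    ring
  calc Real.sqrt (2 * Real.pi * ((s + 1 : ℕ) : ℝ)) * (((s + 1 : ℕ) : ℝ) / Real.exp 1) ^ (s + 1)
      = Real.sqrt Real.pi *
        (Real.sqrt (2 * ((s + 1 : ℕ) : ℝ)) * (((s + 1 : ℕ) : ℝ) / Real.exp 1) ^ (s + 1)) := by
        rw [hsplit]; ring
    _ ≤ (Nat.factorial (s + 1) : ℝ) := h1

/-- Asymptotic lower bound for the diagonal triangular Ramsey number `m = R₁(n, n, k)`: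
`(m+1)^{2T_n} ≥ √(2πT_n)·(T_n/e)^{T_n}·2^{(n/k)^k + T_n - 1}`, and hence
`m > (2πT_n)^{1/(4T_n)}·√(2T_n/e)·2^{(n^k - k^k)/(2k^k T_n)} - 1`. -/
theorem R1_diagonal_lower_bound (n k : ℕ) (hk : 1 ≤ k) (hkn : k ≤ n) :
    ((R1 n n k : ℝ) + 1) ^ (2 * T n) ≥
      Real.sqrt (2 * Real.pi * (T n : ℝ)) * ((T n : ℝ) / Real.exp 1) ^ (T n) *
        (2 : ℝ) ^ (((n : ℝ) / (k : ℝ)) ^ k + (T n : ℝ) - 1) ∧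
    (R1 n n k : ℝ) >
      (2 * Real.pi * (T n : ℝ)) ^ ((1 : ℝ) / (4 * (T n : ℝ))) *
        Real.sqrt (2 * (T n : ℝ) / Real.exp 1) *
        (2 : ℝ) ^ ((((n : ℝ) ^ k - (k : ℝ) ^ k)) / (2 * (k : ℝ) ^ k * (T n : ℝ))) - 1 := by
  classical
  have hn : 1 ≤ n := hk.trans hkn
  have hne : Set.Nonempty {m | max n n ≤ m ∧ ∀ χ : Finset ℕ → Bool,
      (∃ Z : BTri m n, ∀ S : BTri m k, S.le Z → χ S.toSet = true) ∨
      (∃ Z : BTri m n, ∀ S : BTri m k, S.le Z → χ S.toSet = false)} :=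
    R1_set_nonempty n k hk hkn
  have hmem : max n n ≤ R1 n n k ∧ ∀ χ : Finset ℕ → Bool,
      (∃ Z : BTri (R1 n n k) n, ∀ S : BTri (R1 n n k) k, S.le Z → χ S.toSet = true) ∨
      (∃ Z : BTri (R1 n n k) n, ∀ S : BTri (R1 n n k) k, S.le Z → χ S.toSet = false) :=
    Nat.sInf_mem hne
  set m := R1 n n k with hmdef
  obtain ⟨hnm', hprop⟩ := hmem
  have hnm : n ≤ m := by simpa using hnm'
  have hcount := counting n k m hk hkn hnm hprop
  set t : ℝ := (T n : ℝ) with htdef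
  have hT1 : T 1 = 1 := rfl
  have hTn1 : 1 ≤ T n := by have := T_mono hn; omega
  have ht1 : (1 : ℝ) ≤ t := by rw [htdef]; exact_mod_cast hTn1
  have htpos : (0 : ℝ) < t := lt_of_lt_of_le one_pos ht1
  have htne : t ≠ 0 := ne_of_gt htpos
  have hkpos : (0 : ℝ) < (k : ℝ) := by exact_mod_cast hk
  have hkkne : ((k : ℝ)) ^ k ≠ 0 := ne_of_gt (pow_pos hkpos _)
  set a : ℝ := ((n : ℝ) / (k : ℝ)) ^ k with hadef
  have ha1 : (1 : ℝ) ≤ a := by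
    rw [hadef]
    have hkn' : (k : ℝ) ≤ (n : ℝ) := by exact_mod_cast hkn
    have h1 : (1 : ℝ) ≤ (n : ℝ) / (k : ℝ) := by rw [le_div_iff₀ hkpos]; linarith
    exact one_le_pow₀ h1
  set C := n.choose k with hCdef
  have hC1 : 1 ≤ C := Nat.choose_pos hkn
  set X : ℝ := Real.sqrt (2 * Real.pi * t) * (t / Real.exp 1) ^ (T n) *
    (2 : ℝ) ^ (a + t - 1) with hXdef
  have hsplit : (2 : ℝ) ^ (a + t - 1) = (2 : ℝ) ^ (a - 1) * (2 : ℝ) ^ (T n) := by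
    rw [← Real.rpow_natCast 2 (T n), ← Real.rpow_add (by norm_num : (0 : ℝ) < 2)]
    rw [← htdef]
    congr 1
    ring
  have hmain : X < ((m : ℝ) + 1) ^ (2 * T n) := by
    have hstir := stirling_bound (T n) hTn1
    rw [← htdef] at hstir
    have hac : a ≤ (C : ℝ) := by rw [hadef, hCdef]; exact div_pow_le_choose k n hk hkn
    have h2a : (2 : ℝ) ^ (a - 1) ≤ (2 : ℝ) ^ ((C : ℝ) - 1) :=
      (Real.rpow_le_rpow_left_iff (by norm_num)).2 (by linarith)
    have hcastC : ((C - 1 : ℕ) : ℝ) = (C : ℝ) - 1 := by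
      rw [Nat.cast_sub hC1, Nat.cast_one]
    have h2C : (2 : ℝ) ^ ((C : ℝ) - 1) = ((2 ^ (C - 1) : ℕ) : ℝ) := by
      rw [← hcastC, Real.rpow_natCast]
      push_cast
      ring
    have hchoose : ((2 ^ (C - 1) : ℕ) : ℝ) ≤ ((T m).choose (T n) : ℝ) := by
      exact_mod_cast hcount
    have h2achoose : (2 : ℝ) ^ (a - 1) ≤ ((T m).choose (T n) : ℝ) := by
      rw [h2C] at h2a; exact h2a.trans hchoose
    have hfactpos : (0 : ℝ) < ((T n).factorial : ℝ) := by exact_mod_cast Nat.factorial_pos _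
    have hch : ((T m).choose (T n) : ℝ) * ((T n).factorial : ℝ) ≤ ((T m : ℕ) : ℝ) ^ (T n) := by
      have h := Nat.choose_le_pow_div (α := ℝ) (T n) (T m)
      rw [le_div_iff₀ hfactpos] at h
      exact h
    have hTm : ((T m : ℕ) : ℝ) * 2 = (m : ℝ) * ((m : ℝ) + 1) := by exact_mod_cast T_mul_two m
    have hTmlt : ((T m : ℕ) : ℝ) < ((m : ℝ) + 1) ^ 2 / 2 := by nlinarith
    have hTmnn : (0 : ℝ) ≤ ((T m : ℕ) : ℝ) := by positivity
    have hTmpow : ((T m : ℕ) : ℝ) ^ (T n) < (((m : ℝ) + 1) ^ 2 / 2) ^ (T n) :=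
      pow_lt_pow_left₀ hTmlt hTmnn (by omega)
    have h2pos : (0 : ℝ) < (2 : ℝ) ^ (T n) := by positivity
    calc X = (Real.sqrt (2 * Real.pi * t) * (t / Real.exp 1) ^ (T n)) * (2 : ℝ) ^ (a - 1) *
          (2 : ℝ) ^ (T n) := by rw [hXdef, hsplit]; ring
      _ ≤ (((T n).factorial : ℝ) * ((T m).choose (T n) : ℝ)) * (2 : ℝ) ^ (T n) := by
          apply mul_le_mul_of_nonneg_right _ (le_of_lt h2pos)
          exact mul_le_mul hstir h2achoose (by positivity) (le_of_lt hfactpos)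
      _ = (((T m).choose (T n) : ℝ) * ((T n).factorial : ℝ)) * (2 : ℝ) ^ (T n) := by ring
      _ ≤ ((T m : ℕ) : ℝ) ^ (T n) * (2 : ℝ) ^ (T n) :=
          mul_le_mul_of_nonneg_right hch (le_of_lt h2pos)
      _ < (((m : ℝ) + 1) ^ 2 / 2) ^ (T n) * (2 : ℝ) ^ (T n) :=
          mul_lt_mul_of_pos_right hTmpow h2pos
      _ = ((m : ℝ) + 1) ^ (2 * T n) := by
          rw [div_pow, div_mul_cancel₀, ← pow_mul]
          exact ne_of_gt h2pos
  refine ⟨hmain.le, ?_⟩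
  set Y : ℝ := (2 * Real.pi * t) ^ ((1 : ℝ) / (4 * t)) * Real.sqrt (2 * t / Real.exp 1) *
      (2 : ℝ) ^ (((n : ℝ) ^ k - (k : ℝ) ^ k) / (2 * (k : ℝ) ^ k * t)) with hYdef
  have h2ptpos : (0 : ℝ) < 2 * Real.pi * t := by positivity
  have hYnn : 0 ≤ Y := by rw [hYdef]; positivity
  have hYX : Y ^ (2 * T n) = X := by
    rw [hYdef, hXdef, mul_pow, mul_pow]
    have e1 : ((2 * Real.pi * t) ^ ((1 : ℝ) / (4 * t))) ^ (2 * T n) =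
        Real.sqrt (2 * Real.pi * t) := by
      rw [← Real.rpow_natCast ((2 * Real.pi * t) ^ ((1 : ℝ) / (4 * t))) (2 * T n),
        ← Real.rpow_mul (le_of_lt h2ptpos), Real.sqrt_eq_rpow]
      congr 1
      push_cast
      rw [← htdef]
      field_simp
      ring
    have e2 : (Real.sqrt (2 * t / Real.exp 1)) ^ (2 * T n) =
        (2 : ℝ) ^ (T n) * (t / Real.exp 1) ^ (T n) := by
      rw [pow_mul, Real.sq_sqrt (by positivity : (0 : ℝ) ≤ 2 * t / Real.exp 1)]
      rw [show (2 * t / Real.exp 1 : ℝ) = 2 * (t / Real.exp 1) by ring, mul_pow]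
    have e3 : ((2 : ℝ) ^ (((n : ℝ) ^ k - (k : ℝ) ^ k) / (2 * (k : ℝ) ^ k * t))) ^ (2 * T n) =
        (2 : ℝ) ^ (a - 1) := by
      rw [← Real.rpow_natCast ((2 : ℝ) ^ (((n : ℝ) ^ k - (k : ℝ) ^ k) /
          (2 * (k : ℝ) ^ k * t))) (2 * T n),
        ← Real.rpow_mul (by norm_num : (0 : ℝ) ≤ 2)]
      congr 1
      push_cast
      rw [← htdef, hadef, div_pow]
      field_simp
    rw [e1, e2, e3, hsplit]
    ring
  have hYlt : Y < (m : ℝ) + 1 := by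
    have h1 : Y ^ (2 * T n) < ((m : ℝ) + 1) ^ (2 * T n) := by rw [hYX]; exact hmain
    refine (pow_lt_pow_iff_left₀ hYnn (by positivity) ?_).1 h1
    omega
  linarith
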